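/- Let (X, d) be a complete metric space and for each i ∈ ℕ let F_i = {X; f_{1,i}, …, f_{n,i}} be a function system of n maps, each f_{r,i} a φ_{r,i}-contraction for a comparison function φ_{r,i}. Suppose there is a compact set C ⊆ X invariant for all the maps f_{r,i} (i.e. f_{r,i}(x) ∈ C for x ∈ C), and that for each r = 1, …, n the sequence (f_{r,i})_{i∈ℕ} converges uniformly on C to a map f_r as i → ∞. Let F(A) = ⋃_{r=1}^n f_r(A) be the induced set map and assume F is a φ-contraction on (H(X), h) for a comparison function φ with φ(t) < t for t > 0. Then for every nonempty compact P ⊆ C, the forward SFS trajectories Φ_k(P) = F_k∘F_{k−1}∘⋯∘F₁(P) converge in the Hausdorff metric to the unique attractor of F. -/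

import Mathlib

open Filter Set Topology

/-- Forward composition: `fwdComp g k = g (k-1) ∘ ⋯ ∘ g 1 ∘ g 0`
(i.e. `g_k ∘ g_{k-1} ∘ ⋯ ∘ g₁` in 1-based notation). -/
def fwdComp {α : Type*} (g : ℕ → α → α) : ℕ → α → α
  | 0 => id
  | k + 1 => fun a => g k (fwdComp g k a)

section Aux

open Metric TopologicalSpace

/-- A comparison function satisfies `ψ t < t` for positive `t`. -/
private lemma cmp_lt (ψ : ℝ → ℝ)
    (hmono : ∀ s t : ℝ, 0 ≤ s → s ≤ t → ψ s ≤ ψ t)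
    (hiter : ∀ t : ℝ, 0 ≤ t → Tendsto (fun p => ψ^[p] t) atTop (nhds 0)) :
    ∀ t : ℝ, 0 < t → ψ t < t := by
  intro t ht
  by_contra hc
  push_neg at hc
  have key : ∀ p, t ≤ ψ^[p] t := by
    intro p
    induction p with
    | zero => simp
    | succ p ih =>
      rw [Function.iterate_succ_apply']
      exact hc.trans (hmono t _ ht.le ih)
  exact absurd (ge_of_tendsto' (hiter t ht.le) key) (not_le.mpr ht)

/-- A comparison function satisfies `ψ t ≤ t` for nonnegative `t`. -/
private lemma cmp_le (ψ : ℝ → ℝ)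
    (hmono : ∀ s t : ℝ, 0 ≤ s → s ≤ t → ψ s ≤ ψ t)
    (hiter : ∀ t : ℝ, 0 ≤ t → Tendsto (fun p => ψ^[p] t) atTop (nhds 0)) :
    ∀ t : ℝ, 0 ≤ t → ψ t ≤ t := by
  intro t ht
  rcases ht.lt_or_eq with h | h
  · exact (cmp_lt ψ hmono hiter t h).le
  · rw [← h]
    by_contra hc
    push_neg at hc
    have h1 := cmp_lt ψ hmono hiter (ψ 0) hc
    have h2 := hmono 0 (ψ 0) le_rfl hc.le
    linarith

/-- Existence of a fixed point for a `ψ`-contraction on a compact set. -/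
private lemma fixed_point_exists {Y : Type*} [MetricSpace Y] {S : Set Y}
    (hS : IsCompact S) {A₀ : Y} (hA₀ : A₀ ∈ S) (T : Y → Y)
    (hTS : ∀ A ∈ S, T A ∈ S) (ψ : ℝ → ℝ)
    (hmono : ∀ s t : ℝ, 0 ≤ s → s ≤ t → ψ s ≤ ψ t)
    (hiter : ∀ t : ℝ, 0 ≤ t → Tendsto (fun p => ψ^[p] t) atTop (nhds 0))
    (hcontr : ∀ A ∈ S, ∀ B ∈ S, dist (T A) (T B) ≤ ψ (dist A B)) :
    ∃ A ∈ S, T A = A := by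
  have hle := cmp_le ψ hmono hiter
  set R : ℕ → Y := fun k => T^[k] A₀ with hR
  have hRsucc : ∀ k, R (k + 1) = T (R k) := fun k => Function.iterate_succ_apply' T k A₀
  have hRS : ∀ k, R k ∈ S := by
    intro k; induction k with
    | zero => exact hA₀
    | succ k ih => rw [hRsucc]; exact hTS _ ih
  set t₀ := dist (R 1) (R 0) with ht₀
  have hd : ∀ k, dist (R (k + 1)) (R k) ≤ ψ^[k] t₀ := by
    intro k; induction k with
    | zero => simp [ht₀]
    | succ k ih =>
      rw [Function.iterate_succ_apply']
      calc dist (R (k + 1 + 1)) (R (k + 1)) = dist (T (R (k + 1))) (T (R k)) := by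
            rw [hRsucc (k + 1), hRsucc k]
        _ ≤ ψ (dist (R (k + 1)) (R k)) := hcontr _ (hRS _) _ (hRS _)
        _ ≤ ψ (ψ^[k] t₀) := hmono _ _ dist_nonneg ih
  obtain ⟨A, hA, g, hgmono, hRg⟩ := hS.isSeqCompact hRS
  have hRgA : Tendsto (fun k => dist (R (g k)) A) atTop (nhds 0) :=
    tendsto_iff_dist_tendsto_zero.mp hRg
  have hiterg : Tendsto (fun k => ψ^[g k] t₀) atTop (nhds 0) :=
    (hiter t₀ dist_nonneg).comp hgmono.tendsto_atTop
  have hwTA : Tendsto (fun k => R (g k + 1)) atTop (nhds (T A)) := by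
    refine tendsto_iff_dist_tendsto_zero.mpr (squeeze_zero (fun _ => dist_nonneg)
      (fun k => ?_) hRgA)
    rw [hRsucc]
    exact (hcontr _ (hRS _) _ hA).trans (hle _ dist_nonneg)
  have hwA : Tendsto (fun k => R (g k + 1)) atTop (nhds A) := by
    refine tendsto_iff_dist_tendsto_zero.mpr (squeeze_zero (fun _ => dist_nonneg)
      (fun k => ?_) (by simpa using hiterg.add hRgA))
    calc dist (R (g k + 1)) A ≤ dist (R (g k + 1)) (R (g k)) + dist (R (g k)) A :=
          dist_triangle _ _ _
      _ ≤ ψ^[g k] t₀ + dist (R (g k)) A := add_le_add (hd _) le_rfl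
  exact ⟨A, hA, tendsto_nhds_unique hwTA hwA⟩

/-- Convergence of perturbed trajectories to the fixed point of a `ψ`-contraction
on a compact set. -/
private lemma traj_tendsto {Y : Type*} [MetricSpace Y] {S : Set Y}
    (hS : IsCompact S) (T : Y → Y) (hTS : ∀ A ∈ S, T A ∈ S)
    (ψ : ℝ → ℝ)
    (hmono : ∀ s t : ℝ, 0 ≤ s → s ≤ t → ψ s ≤ ψ t)
    (hiter : ∀ t : ℝ, 0 ≤ t → Tendsto (fun p => ψ^[p] t) atTop (nhds 0))
    (hcontr : ∀ A ∈ S, ∀ B ∈ S, dist (T A) (T B) ≤ ψ (dist A B))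
    (M : ℝ) (hM : ∀ A ∈ S, ∀ B ∈ S, dist A B ≤ M)
    {Astar : Y} (hAstarS : Astar ∈ S) (hfix : T Astar = Astar)
    (Q : ℕ → Y) (hQS : ∀ k, Q k ∈ S)
    (hQT : Tendsto (fun k => dist (Q (k + 1)) (T (Q k))) atTop (nhds 0)) :
    Tendsto Q atTop (nhds Astar) := by
  have hle := cmp_le ψ hmono hiter
  have hM0 : 0 ≤ M := le_trans dist_nonneg (hM Astar hAstarS Astar hAstarS)
  -- every limit point of `Q` is the image under `T` of another limit point
  have step : ∀ A : Y,
      (∃ g : ℕ → ℕ, Tendsto g atTop atTop ∧ Tendsto (fun k => Q (g k)) atTop (nhds A)) →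
      ∃ B ∈ S, (∃ g : ℕ → ℕ, Tendsto g atTop atTop ∧
        Tendsto (fun k => Q (g k)) atTop (nhds B)) ∧ A = T B := by
    rintro A ⟨g, hg, hQg⟩
    obtain ⟨B, hBS, ms, hmsmono, hms⟩ :=
      hS.isSeqCompact (x := fun k => Q (g k - 1)) (fun k => hQS _)
    set g' : ℕ → ℕ := fun k => g (ms k) - 1 with hg'def
    have hg'top : Tendsto g' atTop atTop :=
      (tendsto_sub_atTop_nat 1).comp (hg.comp hmsmono.tendsto_atTop)
    have hQg' : Tendsto (fun k => Q (g' k)) atTop (nhds B) := hms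
    have hQg'B : Tendsto (fun k => dist (Q (g' k)) B) atTop (nhds 0) :=
      tendsto_iff_dist_tendsto_zero.mp hQg'
    have hev : ∀ᶠ k in atTop, g' k + 1 = g (ms k) := by
      have h1 : ∀ᶠ k in atTop, 1 ≤ g (ms k) :=
        (hg.comp hmsmono.tendsto_atTop).eventually_ge_atTop 1
      exact h1.mono fun k hk => Nat.succ_pred_eq_of_pos hk
    have h1 : Tendsto (fun k => dist (Q (g' k + 1)) (T B)) atTop (nhds 0) := by
      refine squeeze_zero (fun _ => dist_nonneg) (fun k => ?_)
        (by simpa using (hQT.comp hg'top).add hQg'B)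
      calc dist (Q (g' k + 1)) (T B)
          ≤ dist (Q (g' k + 1)) (T (Q (g' k))) + dist (T (Q (g' k))) (T B) :=
            dist_triangle _ _ _
        _ ≤ dist (Q (g' k + 1)) (T (Q (g' k))) + dist (Q (g' k)) B :=
            add_le_add le_rfl ((hcontr _ (hQS _) _ hBS).trans (hle _ dist_nonneg))
    have h2 : Tendsto (fun k => Q (g (ms k))) atTop (nhds (T B)) := by
      refine tendsto_iff_dist_tendsto_zero.mpr (h1.congr' ?_)
      exact hev.mono fun k hk => by dsimp only; rw [hk]
    have h3 : Tendsto (fun k => Q (g (ms k))) atTop (nhds A) :=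
      hQg.comp hmsmono.tendsto_atTop
    exact ⟨B, hBS, ⟨g', hg'top, hQg'⟩, tendsto_nhds_unique h3 h2⟩
  have iterbound : ∀ m : ℕ, ∀ A ∈ S,
      (∃ g : ℕ → ℕ, Tendsto g atTop atTop ∧ Tendsto (fun k => Q (g k)) atTop (nhds A)) →
      dist A Astar ≤ ψ^[m] M := by
    intro m
    induction m with
    | zero => intro A hA _; simpa using hM A hA Astar hAstarS
    | succ m ih =>
      intro A hA hlim
      obtain ⟨B, hBS, hBlim, rfl⟩ := step A hlim
      rw [Function.iterate_succ_apply']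
      calc dist (T B) Astar = dist (T B) (T Astar) := by rw [hfix]
        _ ≤ ψ (dist B Astar) := hcontr _ hBS _ hAstarS
        _ ≤ ψ (ψ^[m] M) := hmono _ _ dist_nonneg (ih B hBS hBlim)
  have limpt_eq : ∀ A ∈ S,
      (∃ g : ℕ → ℕ, Tendsto g atTop atTop ∧ Tendsto (fun k => Q (g k)) atTop (nhds A)) →
      A = Astar := by
    intro A hA hlim
    have h0 : dist A Astar ≤ 0 :=
      ge_of_tendsto' (hiter M hM0) (fun m => iterbound m A hA hlim)
    exact eq_of_dist_eq_zero (le_antisymm h0 dist_nonneg)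
  apply tendsto_of_subseq_tendsto
  intro ns hns
  obtain ⟨a, haS, ms, hmsmono, hQnm⟩ :=
    hS.isSeqCompact (x := fun n => Q (ns n)) (fun n => hQS _)
  refine ⟨ms, ?_⟩
  have ha : a = Astar :=
    limpt_eq a haS ⟨fun n => ns (ms n), hns.comp hmsmono.tendsto_atTop, hQnm⟩
  rw [← ha]
  exact hQnm

end Aux

/-- **convergence of forward SFS trajectories.** Each function system
`F i` consists of `n` maps `f i r`, each a `φseq i r`-contraction for comparison
functions `φseq i r`; there is a nonempty compact set `C` invariant for all the maps,
and for each `r` the sequence `(f i r)_i` converges uniformly on `C` to `flim r`. If the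
induced set map `F(A) = ⋃ r, flim r '' A` is a `φ`-contraction for the Hausdorff metric,
for a comparison function `φ` with `φ t < t` for `t > 0`, then the forward SFS
trajectories of every nonempty compact `P ⊆ C` converge in the Hausdorff metric to the
unique attractor of `F`. -/
theorem forward_SFS_trajectories_convergence {X : Type*} [MetricSpace X] [CompleteSpace X]
    (n : ℕ) (hn : 0 < n)
    (f : ℕ → Fin n → X → X) (flim : Fin n → X → X)
    (φseq : ℕ → Fin n → ℝ → ℝ)
    (hmapseq : ∀ i r, ∀ t : ℝ, 0 ≤ t → 0 ≤ φseq i r t)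
    (hmonoseq : ∀ i r, ∀ s t : ℝ, 0 ≤ s → s ≤ t → φseq i r s ≤ φseq i r t)
    (hiterseq : ∀ i r, ∀ t : ℝ, 0 ≤ t →
      Tendsto (fun p => (φseq i r)^[p] t) atTop (nhds 0))
    (hcontrseq : ∀ i r, ∀ x y : X, dist (f i r x) (f i r y) ≤ φseq i r (dist x y))
    (C : Set X) (hCne : C.Nonempty) (hCcomp : IsCompact C)
    (hinv : ∀ i r, ∀ x ∈ C, f i r x ∈ C)
    (hunif : ∀ r, TendstoUniformlyOn (fun i => f i r) (flim r) atTop C)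
    (F : Set X → Set X) (hFdef : ∀ A, F A = ⋃ r : Fin n, flim r '' A)
    (Fi : ℕ → Set X → Set X) (hFi : ∀ i A, Fi i A = ⋃ r : Fin n, f i r '' A)
    (φ : ℝ → ℝ)
    (hmap : ∀ t : ℝ, 0 ≤ t → 0 ≤ φ t)
    (hmono : ∀ s t : ℝ, 0 ≤ s → s ≤ t → φ s ≤ φ t)
    (hiter : ∀ t : ℝ, 0 ≤ t → Tendsto (fun p => φ^[p] t) atTop (nhds 0))
    (hlt : ∀ t : ℝ, 0 < t → φ t < t)
    (hFcontr : ∀ A B : Set X, A.Nonempty → IsCompact A → B.Nonempty → IsCompact B →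
      Metric.hausdorffDist (F A) (F B) ≤ φ (Metric.hausdorffDist A B)) :
    ∃ Astar : Set X, Astar.Nonempty ∧ IsCompact Astar ∧ F Astar = Astar ∧
      (∀ B : Set X, B.Nonempty → IsCompact B → F B = B → B = Astar) ∧
      ∀ P : Set X, P.Nonempty → IsCompact P → P ⊆ C →
        Tendsto (fun k => Metric.hausdorffDist (fwdComp Fi k P) Astar)
          atTop (nhds 0) := by
  classical
  open Metric TopologicalSpace in
  -- each `f i r` is nonexpansive
  have hlipf : ∀ i r (x y : X), dist (f i r x) (f i r y) ≤ dist x y := by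
    intro i r x y
    rcases eq_or_ne x y with rfl | hxy
    · simp
    · have hd : 0 < dist x y := dist_pos.mpr hxy
      exact (hcontrseq i r x y).trans (cmp_lt _ (hmonoseq i r) (hiterseq i r) _ hd).le
  have hfc : ∀ i r, Continuous (f i r) := fun i r =>
    (LipschitzWith.of_dist_le_mul (K := 1) fun x y => by
      simpa using hlipf i r x y).continuous
  have hflim_pt : ∀ r, ∀ x ∈ C, Tendsto (fun i => f i r x) atTop (nhds (flim r x)) :=
    fun r x hx => (hunif r).tendsto_at hx
  have hflim_mem : ∀ r, ∀ x ∈ C, flim r x ∈ C := fun r x hx =>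
    hCcomp.isClosed.mem_of_tendsto (hflim_pt r x hx)
      (Eventually.of_forall fun i => hinv i r x hx)
  have hflim_lip : ∀ r, ∀ x ∈ C, ∀ y ∈ C, dist (flim r x) (flim r y) ≤ dist x y := by
    intro r x hx y hy
    have h1 : Tendsto (fun i => dist (f i r x) (f i r y)) atTop
        (nhds (dist (flim r x) (flim r y))) := (hflim_pt r x hx).dist (hflim_pt r y hy)
    exact le_of_tendsto h1 (Eventually.of_forall fun i => hlipf i r x y)
  have hflim_cont : ∀ r, ContinuousOn (flim r) C := fun r =>
    (LipschitzOnWith.of_dist_le_mul (K := 1) fun x hx y hy => by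
      simpa using hflim_lip r x hx y hy).continuousOn
  have hr0 : (0 : ℕ) < n := hn
  set r₀ : Fin n := ⟨0, hn⟩ with hr₀
  have hFim : ∀ A : Set X, A.Nonempty → IsCompact A → A ⊆ C →
      (F A).Nonempty ∧ IsCompact (F A) ∧ F A ⊆ C := by
    intro A hAne hAc hAC
    rw [hFdef]
    refine ⟨?_, ?_, ?_⟩
    · obtain ⟨x, hx⟩ := hAne
      exact ⟨flim r₀ x, mem_iUnion.mpr ⟨r₀, mem_image_of_mem _ hx⟩⟩
    · exact isCompact_iUnion fun r => hAc.image_of_continuousOn ((hflim_cont r).mono hAC)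
    · exact iUnion_subset fun r => image_subset_iff.mpr fun x hx => hflim_mem r x (hAC hx)
  have hFiim : ∀ i (A : Set X), A.Nonempty → IsCompact A →
      (Fi i A).Nonempty ∧ IsCompact (Fi i A) ∧ (A ⊆ C → Fi i A ⊆ C) := by
    intro i A hAne hAc
    rw [hFi]
    refine ⟨?_, ?_, ?_⟩
    · obtain ⟨x, hx⟩ := hAne
      exact ⟨f i r₀ x, mem_iUnion.mpr ⟨r₀, mem_image_of_mem _ hx⟩⟩
    · exact isCompact_iUnion fun r => hAc.image (hfc i r)
    · intro hAC
      exact iUnion_subset fun r => image_subset_iff.mpr fun x hx => hinv i r x (hAC hx)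
  -- the compact collection of nonempty compact subsets of `C`
  set S : Set (NonemptyCompacts X) := {A | (A : Set X) ⊆ C} with hSdef
  have hScomp : IsCompact S := by
    have hCcs : CompactSpace C := isCompact_iff_compactSpace.mp hCcomp
    set e : NonemptyCompacts C → NonemptyCompacts X := fun K =>
      ⟨⟨Subtype.val '' (K : Set C), K.isCompact.image continuous_subtype_val⟩,
        K.nonempty.image _⟩ with hedef
    have he : Isometry e := Isometry.of_dist_eq fun K L => by
      simp only [hedef, NonemptyCompacts.dist_eq]
      exact hausdorffDist_image isometry_subtype_coe
    have hrange : range e = S := by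
      ext A
      constructor
      · rintro ⟨K, rfl⟩
        rintro x ⟨y, -, rfl⟩
        exact y.2
      · intro hA
        have hsub : (A : Set X) ⊆ range (Subtype.val : C → X) := by
          rw [Subtype.range_coe]; exact hA
        have hpre : IsCompact (Subtype.val ⁻¹' (A : Set X) : Set C) :=
          hCcomp.isClosed.isClosedEmbedding_subtypeVal.toIsInducing.isCompact_preimage
            (by rw [Subtype.range_coe]; exact hCcomp.isClosed) A.isCompact
        have hima : Subtype.val '' (Subtype.val ⁻¹' (A : Set X)) = (A : Set X) :=
          image_preimage_eq_of_subset hsub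
        have hne : (Subtype.val ⁻¹' (A : Set X) : Set C).Nonempty := by
          obtain ⟨x, hx⟩ := A.nonempty
          exact ⟨⟨x, hA hx⟩, hx⟩
        exact ⟨⟨⟨_, hpre⟩, hne⟩, NonemptyCompacts.ext (by simpa [hedef] using hima)⟩
    rw [← hrange]
    exact isCompact_range he.continuous
  -- the induced set map as a self-map of `NonemptyCompacts X`
  set T : NonemptyCompacts X → NonemptyCompacts X := fun A =>
    if h : (A : Set X) ⊆ C then
      ⟨⟨F (A : Set X), (hFim _ A.nonempty A.isCompact h).2.1⟩,
        (hFim _ A.nonempty A.isCompact h).1⟩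
    else A with hTdef
  have hTcoe : ∀ A : NonemptyCompacts X, (A : Set X) ⊆ C →
      ((T A : Set X)) = F (A : Set X) := by
    intro A h
    simp only [hTdef, dif_pos h]
    rfl
  have hTS : ∀ A ∈ S, T A ∈ S := by
    intro A hA
    have h1 := hTcoe A hA
    simp only [hSdef, mem_setOf_eq] at hA ⊢
    rw [h1]
    exact (hFim _ A.nonempty A.isCompact hA).2.2
  have hTcontr : ∀ A ∈ S, ∀ B ∈ S, dist (T A) (T B) ≤ φ (dist A B) := by
    intro A hA B hB
    rw [NonemptyCompacts.dist_eq, NonemptyCompacts.dist_eq, hTcoe A hA, hTcoe B hB]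
    exact hFcontr _ _ A.nonempty A.isCompact B.nonempty B.isCompact
  have hCmem : (⟨⟨C, hCcomp⟩, hCne⟩ : NonemptyCompacts X) ∈ S := fun x hx => hx
  obtain ⟨Ac, hAcS, hAcfix⟩ :=
    fixed_point_exists hScomp hCmem T hTS φ hmono hiter hTcontr
  have hfixset : F (Ac : Set X) = (Ac : Set X) := by
    rw [← hTcoe Ac hAcS, hAcfix]
  have hM : ∀ A ∈ S, ∀ B ∈ S, dist A B ≤ diam C := by
    intro A hA B hB
    rw [NonemptyCompacts.dist_eq]
    apply hausdorffDist_le_of_mem_dist diam_nonneg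
    · intro x hx
      obtain ⟨y, hy⟩ := B.nonempty
      exact ⟨y, hy, dist_le_diam_of_mem hCcomp.isBounded (hA hx) (hB hy)⟩
    · intro y hy
      obtain ⟨x, hx⟩ := A.nonempty
      exact ⟨x, hx, dist_le_diam_of_mem hCcomp.isBounded (hB hy) (hA hx)⟩
  -- uniform closeness of `Fi i` to `F` on subsets of `C`
  have hFiF : ∀ δ : ℝ, 0 < δ → ∀ᶠ i in atTop, ∀ A : Set X, A ⊆ C →
      hausdorffDist (Fi i A) (F A) ≤ δ := by
    intro δ hδ
    have h1 : ∀ᶠ i in atTop, ∀ r, ∀ x ∈ C, dist (flim r x) (f i r x) < δ :=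
      eventually_all.mpr fun r => (Metric.tendstoUniformlyOn_iff.mp (hunif r)) δ hδ
    filter_upwards [h1] with i hi
    intro A hAC
    rw [hFi, hFdef]
    apply hausdorffDist_le_of_mem_dist hδ.le
    · intro x hx
      simp only [mem_iUnion, mem_image] at hx
      obtain ⟨r, a, ha, rfl⟩ := hx
      exact ⟨flim r a, mem_iUnion.mpr ⟨r, mem_image_of_mem _ ha⟩,
        by rw [dist_comm]; exact (hi r a (hAC ha)).le⟩
    · intro x hx
      simp only [mem_iUnion, mem_image] at hx
      obtain ⟨r, a, ha, rfl⟩ := hx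
      exact ⟨f i r a, mem_iUnion.mpr ⟨r, mem_image_of_mem _ ha⟩, (hi r a (hAC ha)).le⟩
  refine ⟨(Ac : Set X), Ac.nonempty, Ac.isCompact, hfixset, ?_, ?_⟩
  · -- uniqueness of the attractor
    intro B hBne hBc hBfix
    have hd : hausdorffDist B (Ac : Set X) ≤ φ (hausdorffDist B (Ac : Set X)) := by
      conv_lhs => rw [← hBfix, ← hfixset]
      exact hFcontr B _ hBne hBc Ac.nonempty Ac.isCompact
    have h0 : hausdorffDist B (Ac : Set X) = 0 := by
      by_contra hne0
      have hpos : 0 < hausdorffDist B (Ac : Set X) :=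
        lt_of_le_of_ne hausdorffDist_nonneg (Ne.symm hne0)
      have := hlt _ hpos
      linarith
    have hBAc : (⟨⟨B, hBc⟩, hBne⟩ : NonemptyCompacts X) = Ac := by
      apply eq_of_dist_eq_zero
      rw [NonemptyCompacts.dist_eq]
      exact h0
    exact congrArg (fun K : NonemptyCompacts X => (K : Set X)) hBAc
  · -- convergence of forward trajectories
    intro P hPne hPc hPC
    have hQ : ∀ k, (fwdComp Fi k P).Nonempty ∧ IsCompact (fwdComp Fi k P) ∧
        fwdComp Fi k P ⊆ C := by
      intro k
      induction k with
      | zero => exact ⟨hPne, hPc, hPC⟩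
      | succ k ih =>
        have h := hFiim k _ ih.1 ih.2.1
        exact ⟨h.1, h.2.1, h.2.2 ih.2.2⟩
    set Qc : ℕ → NonemptyCompacts X := fun k =>
      ⟨⟨fwdComp Fi k P, (hQ k).2.1⟩, (hQ k).1⟩ with hQcdef
    have hQS : ∀ k, Qc k ∈ S := fun k => (hQ k).2.2
    have hQT : Tendsto (fun k => dist (Qc (k + 1)) (T (Qc k))) atTop (nhds 0) := by
      rw [Metric.tendsto_atTop]
      intro ε hε
      obtain ⟨N, hN⟩ := eventually_atTop.mp (hFiF (ε / 2) (by positivity))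
      refine ⟨N, fun k hk => ?_⟩
      have hb : dist (Qc (k + 1)) (T (Qc k)) ≤ ε / 2 := by
        rw [NonemptyCompacts.dist_eq, hTcoe _ (hQS k)]
        exact hN k hk _ (hQ k).2.2
      have hb0 : (0 : ℝ) ≤ dist (Qc (k + 1)) (T (Qc k)) := dist_nonneg
      rw [Real.dist_eq, sub_zero, abs_of_nonneg hb0]
      linarith
    have hconv := traj_tendsto hScomp T hTS φ hmono hiter hTcontr (diam C) hM
      hAcS hAcfix Qc hQS hQT
    have h2 := tendsto_iff_dist_tendsto_zero.mp hconv
    exact h2
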